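/- For every n ≥ 4, the subgroup ⟨S_n({231, 312, 321, 1243})⟩ of S_n is isomorphic to the symmetric group S_4; indeed, S_n({231, 312, 321, 1243}) consists exactly of the identity and the permutations (1,2), (2,3), and (1,2)(3,4). -/

import Mathlib

/-- A permutation `π ∈ S_n` contains the pattern `τ ∈ S_k` if there is a strictly
increasing `f : Fin k → Fin n` such that `τ a < τ b ↔ π (f a) < π (f b)`. -/
def PermContains {k n : ℕ} (τ : Equiv.Perm (Fin k)) (π : Equiv.Perm (Fin n)) : Prop :=
  ∃ f : Fin k → Fin n, StrictMono f ∧ ∀ a b : Fin k, τ a < τ b ↔ π (f a) < π (f b)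

/-- `avoidSet n T` is `S_n(T)`: the permutations of `Fin n` avoiding every pattern in `T`,
where `T` is a set of permutations of arbitrary lengths. -/
def avoidSet (n : ℕ) (T : Set (Σ k : ℕ, Equiv.Perm (Fin k))) : Set (Equiv.Perm (Fin n)) :=
  {π | ∀ τ ∈ T, ¬ PermContains τ.2 π}
def p231 : Equiv.Perm (Fin 3) := finRotate 3
def p312 : Equiv.Perm (Fin 3) := (finRotate 3)⁻¹
def p321 : Equiv.Perm (Fin 3) := Equiv.swap 0 2
/-- The pattern 1243. -/
def p1243 : Equiv.Perm (Fin 4) := Equiv.swap 2 3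

example : (p231 0, p231 1, p231 2) = (1,2,0) := by decide
example : (p312 0, p312 1, p312 2) = (2,0,1) := by decide
example : (p321 0, p321 1, p321 2) = (2,1,0) := by decide
example : (p1243 0, p1243 1, p1243 2, p1243 3) = (0,1,3,2) := by decide

variable {n : ℕ}

lemma sm3 {i j k : Fin n} (h1 : i < j) (h2 : j < k) : StrictMono ![i,j,k] := by
  intro a b hab
  fin_cases a <;> fin_cases b <;> simp_all <;>
    first | exact h1 | exact h2 | exact h1.trans h2 | exact absurd hab (by decide)

lemma sm4 {a b c d : Fin n} (h1 : a < b) (h2 : b < c) (h3 : c < d) : StrictMono ![a,b,c,d] := by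
  intro x y hxy
  fin_cases x <;> fin_cases y <;> simp_all <;>
    first
    | exact h1
    | exact h2
    | exact h3
    | exact h1.trans h2
    | exact h2.trans h3
    | exact (h1.trans h2).trans h3


def f3 (i j k : Fin n) : Fin 3 → Fin n := fun a => if a = 0 then i else if a = 1 then j else k

def f4 (i j k l : Fin n) : Fin 4 → Fin n := fun a =>
  if a = 0 then i else if a = 1 then j else if a = 2 then k else l

lemma sm3' {i j k : Fin n} (h1 : i < j) (h2 : j < k) : StrictMono (f3 i j k) := by
  intro a b hab
  fin_cases a <;> fin_cases b <;> simp_all [f3, Fin.ext_iff] <;>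
    first
    | exact h1
    | exact h2
    | exact h1.trans h2

lemma sm4' {i j k l : Fin n} (h1 : i < j) (h2 : j < k) (h3 : k < l) : StrictMono (f4 i j k l) := by
  intro a b hab
  fin_cases a <;> fin_cases b <;> simp_all [f4, Fin.ext_iff] <;>
    first
    | exact h1
    | exact h2
    | exact h3
    | exact h1.trans h2
    | exact h2.trans h3
    | exact (h1.trans h2).trans h3

lemma c231 (π : Equiv.Perm (Fin n)) :
    PermContains p231 π ↔ ∃ i j k : Fin n, i < j ∧ j < k ∧ π k < π i ∧ π i < π j := by
  constructor
  · rintro ⟨f, hf, h⟩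
    exact ⟨f 0, f 1, f 2, hf (by decide), hf (by decide),
      (h 2 0).mp (by decide), (h 0 1).mp (by decide)⟩
  · rintro ⟨i, j, k, h1, h2, h3, h4⟩
    refine ⟨f3 i j k, sm3' h1 h2, ?_⟩
    intro a b
    have h3' := Fin.lt_def.mp h3
    have h4' := Fin.lt_def.mp h4
    fin_cases a <;> fin_cases b <;>
      (first
        | refine iff_of_true (by decide) ?_
        | refine iff_of_false (by decide) ?_) <;>
      simp only [f3, Fin.ext_iff, Fin.lt_def, not_lt, Fin.le_def] <;>
      norm_num <;> omega

lemma c312 (π : Equiv.Perm (Fin n)) :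
    PermContains p312 π ↔ ∃ i j k : Fin n, i < j ∧ j < k ∧ π j < π k ∧ π k < π i := by
  constructor
  · rintro ⟨f, hf, h⟩
    exact ⟨f 0, f 1, f 2, hf (by decide), hf (by decide),
      (h 1 2).mp (by decide), (h 2 0).mp (by decide)⟩
  · rintro ⟨i, j, k, h1, h2, h3, h4⟩
    refine ⟨f3 i j k, sm3' h1 h2, ?_⟩
    intro a b
    have h3' := Fin.lt_def.mp h3
    have h4' := Fin.lt_def.mp h4
    fin_cases a <;> fin_cases b <;>
      (first
        | refine iff_of_true (by decide) ?_
        | refine iff_of_false (by decide) ?_) <;>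
      simp only [f3, Fin.ext_iff, Fin.lt_def, not_lt, Fin.le_def] <;>
      norm_num <;> omega

lemma c321 (π : Equiv.Perm (Fin n)) :
    PermContains p321 π ↔ ∃ i j k : Fin n, i < j ∧ j < k ∧ π j < π i ∧ π k < π j := by
  constructor
  · rintro ⟨f, hf, h⟩
    exact ⟨f 0, f 1, f 2, hf (by decide), hf (by decide),
      (h 1 0).mp (by decide), (h 2 1).mp (by decide)⟩
  · rintro ⟨i, j, k, h1, h2, h3, h4⟩
    refine ⟨f3 i j k, sm3' h1 h2, ?_⟩
    intro a b
    have h3' := Fin.lt_def.mp h3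
    have h4' := Fin.lt_def.mp h4
    fin_cases a <;> fin_cases b <;>
      (first
        | refine iff_of_true (by decide) ?_
        | refine iff_of_false (by decide) ?_) <;>
      simp only [f3, Fin.ext_iff, Fin.lt_def, not_lt, Fin.le_def] <;>
      norm_num <;> omega

lemma c1243 (π : Equiv.Perm (Fin n)) :
    PermContains p1243 π ↔ ∃ a b c d : Fin n, a < b ∧ b < c ∧ c < d ∧
      π a < π b ∧ π b < π d ∧ π d < π c := by
  constructor
  · rintro ⟨f, hf, h⟩
    exact ⟨f 0, f 1, f 2, f 3, hf (by decide), hf (by decide), hf (by decide),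
      (h 0 1).mp (by decide), (h 1 3).mp (by decide), (h 3 2).mp (by decide)⟩
  · rintro ⟨a, b, c, d, h1, h2, h3, h4, h5, h6⟩
    refine ⟨f4 a b c d, sm4' h1 h2 h3, ?_⟩
    intro x y
    have h4' := Fin.lt_def.mp h4
    have h5' := Fin.lt_def.mp h5
    have h6' := Fin.lt_def.mp h6
    fin_cases x <;> fin_cases y <;>
      (first
        | refine iff_of_true (by decide) ?_
        | refine iff_of_false (by decide) ?_) <;>
      simp only [f4, Fin.ext_iff, Fin.lt_def, not_lt, Fin.le_def] <;>
      norm_num <;> omega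

section Struct

variable {π : Equiv.Perm (Fin n)}
variable (hA231 : ∀ i j k : Fin n, i < j → j < k → π k < π i → π i < π j → False)
variable (hA312 : ∀ i j k : Fin n, i < j → j < k → π j < π k → π k < π i → False)
variable (hA321 : ∀ i j k : Fin n, i < j → j < k → π j < π i → π k < π j → False)

include hA231 hA312 hA321 in
lemma inv_adj {i j : Fin n} (hij : i < j) (hinv : π j < π i) :
    j.val = i.val + 1 ∧ (π i).val = i.val + 1 ∧ (π j).val = i.val := by
  have ha : ∀ k, j < k → π i < π k := by
    intro k hk
    rcases lt_trichotomy (π k) (π j) with h | h | h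
    · exact (hA321 i j k hij hk hinv h).elim
    · exact absurd (π.injective h) hk.ne'
    · rcases lt_trichotomy (π k) (π i) with h' | h' | h'
      · exact (hA312 i j k hij hk h h').elim
      · exact absurd (π.injective h') (hij.trans hk).ne'
      · exact h'
  have hb : ∀ k, k < i → π k < π j := by
    intro k hk
    rcases lt_trichotomy (π k) (π i) with h | h | h
    · rcases lt_trichotomy (π k) (π j) with h' | h' | h'
      · exact h'
      · exact absurd (π.injective h') (hk.trans hij).ne
      · exact (hA231 k i j hk hij h' h).elim
    · exact absurd (π.injective h) hk.ne
    · exact (hA321 k i j hk hij h hinv).elim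
  have hadj : j.val = i.val + 1 := by
    by_contra hne
    have hlt : i.val + 1 < j.val := by
      have := Fin.lt_def.mp hij; omega
    set k : Fin n := ⟨i.val + 1, by omega⟩ with hkdef
    have hik : i < k := by simp [Fin.lt_def, hkdef]
    have hkj : k < j := by simp [Fin.lt_def, hkdef]; omega
    rcases lt_trichotomy (π k) (π j) with h | h | h
    · exact hA312 i k j hik hkj h hinv
    · exact absurd (π.injective h) hkj.ne
    · rcases lt_trichotomy (π k) (π i) with h' | h' | h'
      · exact hA321 i k j hik hkj h' h
      · exact absurd (π.injective h') hik.ne'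
      · exact hA231 i k j hik hkj hinv h'
  have cardlem : ∀ c : Fin n,
      (Finset.univ.filter fun x => π x < c).card = c.val := by
    intro c
    have : (Finset.univ.filter fun x => π x < c) =
        (Finset.Iio c).map π.symm.toEmbedding := by
      ext x
      simp only [Finset.mem_filter, Finset.mem_univ, true_and, Finset.mem_map,
        Finset.mem_Iio, Equiv.coe_toEmbedding]
      constructor
      · intro hx; exact ⟨π x, hx, π.symm_apply_apply x⟩
      · rintro ⟨y, hy, rfl⟩; simpa using hy
    rw [this, Finset.card_map, Fin.card_Iio]
  have hfilj : (Finset.univ.filter fun x => π x < π j) = Finset.Iio i := by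
    ext x
    simp only [Finset.mem_filter, Finset.mem_univ, true_and, Finset.mem_Iio]
    constructor
    · intro hx
      by_contra hxi
      push_neg at hxi
      rcases eq_or_lt_of_le hxi with rfl | hxi'
      · exact absurd hx (lt_asymm hinv)
      · rcases eq_or_lt_of_le (Nat.succ_le_of_lt (Fin.lt_def.mp hxi' : i.val < x.val)) with he | hgt
        · have : x = j := Fin.ext (by omega)
          subst this; exact lt_irrefl _ hx
        · have hjx : j < x := Fin.lt_def.mpr (by omega)
          exact absurd hx (lt_asymm (hinv.trans (ha x hjx)))
    · exact hb x
  have hfili : (Finset.univ.filter fun x => π x < π i) = insert j (Finset.Iio i) := by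
    ext x
    simp only [Finset.mem_filter, Finset.mem_univ, true_and, Finset.mem_insert,
      Finset.mem_Iio]
    constructor
    · intro hx
      by_contra hxi
      push_neg at hxi
      obtain ⟨hxj, hxi⟩ := hxi
      rcases eq_or_lt_of_le hxi with rfl | hxi'
      · exact lt_irrefl _ hx
      · rcases eq_or_lt_of_le (Nat.succ_le_of_lt (Fin.lt_def.mp hxi' : i.val < x.val)) with he | hgt
        · exact hxj (Fin.ext (by omega))
        · have hjx : j < x := Fin.lt_def.mpr (by omega)
          exact absurd hx (lt_asymm (ha x hjx))
    · rintro (rfl | hx)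
      · exact hinv
      · exact (hb x hx).trans hinv
  have e1 := cardlem (π j)
  have e2 := cardlem (π i)
  rw [hfilj, Fin.card_Iio] at e1
  rw [hfili, Finset.card_insert_of_notMem (by simp only [Finset.mem_Iio, not_lt]; exact hij.le),
    Fin.card_Iio] at e2
  exact ⟨hadj, by omega, by omega⟩

lemma pigeon (π : Equiv.Perm (Fin n)) (k : Fin n) (hk : k.val < (π k).val) :
    ∃ m : Fin n, k < m ∧ (π m).val ≤ k.val := by
  by_contra hcon
  push_neg at hcon
  have hmaps : ∀ v ∈ Finset.univ.filter fun v : Fin n => v.val ≤ k.val,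
      π.symm v ∈ Finset.Iio k := by
    intro v hv
    simp only [Finset.mem_filter, Finset.mem_univ, true_and] at hv
    simp only [Finset.mem_Iio]
    rcases lt_trichotomy (π.symm v) k with h | h | h
    · exact h
    · exfalso
      have : π k = v := by rw [← h]; simp
      omega
    · exfalso
      have := hcon _ h
      rw [Equiv.apply_symm_apply] at this
      omega
  have hinj : ((Finset.univ.filter fun v : Fin n => v.val ≤ k.val) :
      Set (Fin n)).InjOn π.symm := fun a _ b _ h => π.symm.injective h
  have hcard := Finset.card_le_card_of_injOn _ hmaps hinj
  rw [Fin.card_Iio] at hcard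
  have : (Finset.univ.filter fun v : Fin n => v.val ≤ k.val) =
      Finset.Iic k := by
    ext v
    simp only [Finset.mem_filter, Finset.mem_univ, true_and, Finset.mem_Iic, Fin.le_def]
  rw [this, Fin.card_Iic] at hcard
  omega

include hA231 hA312 hA321 in
lemma hUB : ∀ k : Fin n, (π k).val ≤ k.val + 1 := by
  intro k
  by_contra hcon
  push_neg at hcon
  obtain ⟨m, hkm, hm⟩ := pigeon π k (by omega)
  have hinv : π m < π k := Fin.lt_def.mpr (by omega)
  have := inv_adj hA231 hA312 hA321 hkm hinv
  omega

include hA231 hA312 hA321 in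
lemma hSucc {k : Fin n} (hk : (π k).val = k.val + 1) :
    ∃ hlt : k.val + 1 < n, π ⟨k.val + 1, hlt⟩ = ⟨k.val, by omega⟩ := by
  have hlt : k.val + 1 < n := by rw [← hk]; exact (π k).isLt
  obtain ⟨m, hkm, hm⟩ := pigeon π k (by omega)
  have hinv : π m < π k := Fin.lt_def.mpr (by omega)
  obtain ⟨h1, h2, h3⟩ := inv_adj hA231 hA312 hA321 hkm hinv
  refine ⟨hlt, Fin.ext ?_⟩
  have hm' : (⟨k.val + 1, hlt⟩ : Fin n) = m := Fin.ext h1.symm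
  rw [hm']
  exact h3

lemma id_tail (hub : ∀ k : Fin n, (π k).val ≤ k.val + 1) (c : ℕ)
    (hfix : ∀ v : Fin n, v.val < c → ∃ m : Fin n, m.val < c ∧ π m = v)
    (hnd : ∀ k : Fin n, c ≤ k.val → (π k).val ≠ k.val + 1) :
    ∀ k : Fin n, c ≤ k.val → π k = k := by
  have key : ∀ K : ℕ, ∀ k : Fin n, k.val ≤ K → c ≤ k.val → π k = k := by
    intro K
    induction K with
    | zero =>
      intro k hk hck
      have h1 := hub k
      have h2 := hnd k hck
      exact Fin.ext (by omega)
    | succ K ih =>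
      intro k hk hck
      rcases Nat.lt_or_ge k.val (K + 1) with h | h
      · exact ih k (by omega) hck
      · have hkK : k.val = K + 1 := by omega
        have h1 := hub k
        have h2 := hnd k hck
        have hle : (π k).val ≤ k.val := by omega
        rcases eq_or_lt_of_le hle with he | hlt
        · exact Fin.ext he
        · exfalso
          set v := π k with hv
          rcases Nat.lt_or_ge v.val c with hvc | hvc
          · obtain ⟨m, hmc, hmv⟩ := hfix v hvc
            have : m = k := π.injective (by rw [hmv])
            omega
          · have : π v = v := ih v (by omega) hvc
            have : v = k := π.injective (by rw [this])
            omega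
  exact fun k => key k.val k le_rfl

include hA231 hA312 hA321 in
lemma no_descent
    (hA1243 : ∀ a b c d : Fin n, a < b → b < c → c < d →
      π a < π b → π b < π d → π d < π c → False)
    {x y : Fin n} (hxy : x < y) {k : Fin n} (hyk : y.val < k.val)
    (hv1 : (π x).val < (π y).val) (hv2 : (π y).val < k.val)
    (hkval : (π k).val = k.val + 1) : False := by
  obtain ⟨hlt, hk'⟩ := hSucc hA231 hA312 hA321 hkval
  have hvk' : (π ⟨k.val + 1, hlt⟩).val = k.val := congrArg Fin.val hk'
  exact hA1243 x y k ⟨k.val + 1, hlt⟩ hxy (Fin.lt_def.mpr hyk)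
    (Fin.lt_def.mpr (Nat.lt_succ_self k.val)) (Fin.lt_def.mpr hv1)
    (Fin.lt_def.mpr (by omega)) (Fin.lt_def.mpr (by omega))

end Struct

section Classify

variable {π : Equiv.Perm (Fin n)}

lemma classify (o0 o1 o2 o3 : Fin n)
    (vo0 : o0.val = 0) (vo1 : o1.val = 1) (vo2 : o2.val = 2) (vo3 : o3.val = 3)
    (hA231 : ∀ i j k : Fin n, i < j → j < k → π k < π i → π i < π j → False)
    (hA312 : ∀ i j k : Fin n, i < j → j < k → π j < π k → π k < π i → False)
    (hA321 : ∀ i j k : Fin n, i < j → j < k → π j < π i → π k < π j → False)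
    (hA1243 : ∀ a b c d : Fin n, a < b → b < c → c < d →
      π a < π b → π b < π d → π d < π c → False) :
    π = 1 ∨ π = Equiv.swap o0 o1 ∨ π = Equiv.swap o1 o2 ∨
      π = Equiv.swap o0 o1 * Equiv.swap o2 o3 := by
  have hub := hUB hA231 hA312 hA321
  have vne : ∀ x y : Fin n, x ≠ y → (π x).val ≠ (π y).val :=
    fun x y hxy h => hxy (π.injective (Fin.ext h))
  have ne01 : o0 ≠ o1 := Fin.ne_of_val_ne (by omega)
  have ne02 : o0 ≠ o2 := Fin.ne_of_val_ne (by omega)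
  have ne12 : o1 ≠ o2 := Fin.ne_of_val_ne (by omega)
  have hv0 : (π o0).val ≤ 1 := by have := hub o0; omega
  rcases Nat.lt_or_ge (π o0).val 1 with h0 | h0
  · -- π 0 = 0
    have h0 : (π o0).val = 0 := by omega
    have hv1 : (π o1).val ≤ 2 := by have := hub o1; omega
    have hne10 := vne o1 o0 ne01.symm
    rcases Nat.lt_or_ge (π o1).val 2 with h1 | h1
    · -- π 1 = 1 : identity
      have h1 : (π o1).val = 1 := by omega
      left
      have hnd : ∀ k : Fin n, 2 ≤ k.val → (π k).val ≠ k.val + 1 := by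
        intro k hk hkval
        have hxy : o0 < o1 := Fin.lt_def.mpr (by omega)
        have hyk : o1.val < k.val := by omega
        have hv1' : (π o0).val < (π o1).val := by omega
        have hv2' : (π o1).val < k.val := by omega
        exact no_descent hA231 hA312 hA321 hA1243 hxy hyk hv1' hv2' hkval
      have hfix : ∀ v : Fin n, v.val < 2 → ∃ m : Fin n, m.val < 2 ∧ π m = v := by
        intro v hv
        rcases (by omega : v.val = 0 ∨ v.val = 1) with h | h
        · exact ⟨o0, by omega, Fin.ext (by omega)⟩
        · exact ⟨o1, by omega, Fin.ext (by omega)⟩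
      have htail := id_tail hub 2 hfix hnd
      ext x
      rcases Nat.lt_or_ge x.val 2 with hx | hx
      · rcases (by omega : x.val = 0 ∨ x.val = 1) with h | h
        · have hh : x = o0 := Fin.ext (by omega)
          subst hh
          simp only [Equiv.Perm.one_apply]
          omega
        · have hh : x = o1 := Fin.ext (by omega)
          subst hh
          simp only [Equiv.Perm.one_apply]
          omega
      · exact congrArg Fin.val (htail x hx)
    · -- π 1 = 2, so π 2 = 1 : swap o1 o2
      have h1 : (π o1).val = 2 := by omega
      obtain ⟨hlt2, h2'⟩ := hSucc hA231 hA312 hA321 (show (π o1).val = o1.val + 1 by omega)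
      have e2 : (⟨o1.val + 1, hlt2⟩ : Fin n) = o2 := Fin.ext (show o1.val + 1 = o2.val by omega)
      have h2 : (π o2).val = o1.val := by rw [← e2]; exact congrArg Fin.val h2'
      right; right; left
      have hnd : ∀ k : Fin n, 3 ≤ k.val → (π k).val ≠ k.val + 1 := by
        intro k hk hkval
        have hxy : o0 < o1 := Fin.lt_def.mpr (by omega)
        have hyk : o1.val < k.val := by omega
        have hv1' : (π o0).val < (π o1).val := by omega
        have hv2' : (π o1).val < k.val := by omega
        exact no_descent hA231 hA312 hA321 hA1243 hxy hyk hv1' hv2' hkval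
      have hfix : ∀ v : Fin n, v.val < 3 → ∃ m : Fin n, m.val < 3 ∧ π m = v := by
        intro v hv
        rcases (by omega : v.val = 0 ∨ v.val = 1 ∨ v.val = 2) with h | h | h
        · exact ⟨o0, by omega, Fin.ext (by omega)⟩
        · exact ⟨o2, by omega, Fin.ext (by omega)⟩
        · exact ⟨o1, by omega, Fin.ext (by omega)⟩
      have htail := id_tail hub 3 hfix hnd
      ext x
      rcases Nat.lt_or_ge x.val 3 with hx | hx
      · rcases (by omega : x.val = 0 ∨ x.val = 1 ∨ x.val = 2) with h | h | h
        · have hh : x = o0 := Fin.ext (by omega)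
          subst hh
          rw [Equiv.swap_apply_of_ne_of_ne ne01 ne02]
          omega
        · have hh : x = o1 := Fin.ext (by omega)
          subst hh
          rw [Equiv.swap_apply_left]
          omega
        · have hh : x = o2 := Fin.ext (by omega)
          subst hh
          rw [Equiv.swap_apply_right]
          omega
      · have a1 : x ≠ o1 := Fin.ne_of_val_ne (by omega)
        have a2 : x ≠ o2 := Fin.ne_of_val_ne (by omega)
        rw [htail x hx, Equiv.swap_apply_of_ne_of_ne a1 a2]
  · -- π 0 = 1, so π 1 = 0
    have h0 : (π o0).val = 1 := by omega
    obtain ⟨hlt1, h1'⟩ := hSucc hA231 hA312 hA321 (show (π o0).val = o0.val + 1 by omega)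
    have e1 : (⟨o0.val + 1, hlt1⟩ : Fin n) = o1 := Fin.ext (show o0.val + 1 = o1.val by omega)
    have h1 : (π o1).val = o0.val := by rw [← e1]; exact congrArg Fin.val h1'
    have hv2 : (π o2).val ≤ 3 := by have := hub o2; omega
    have h2lb : 2 ≤ (π o2).val := by
      have n20 := vne o2 o0 ne02.symm
      have n21 := vne o2 o1 ne12.symm
      omega
    rcases Nat.lt_or_ge (π o2).val 3 with h2 | h2
    · -- π 2 = 2 : swap o0 o1
      have h2 : (π o2).val = 2 := by omega
      right; left
      have hnd : ∀ k : Fin n, 3 ≤ k.val → (π k).val ≠ k.val + 1 := by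
        intro k hk hkval
        have hxy : o0 < o2 := Fin.lt_def.mpr (by omega)
        have hyk : o2.val < k.val := by omega
        have hv1' : (π o0).val < (π o2).val := by omega
        have hv2' : (π o2).val < k.val := by omega
        exact no_descent hA231 hA312 hA321 hA1243 hxy hyk hv1' hv2' hkval
      have hfix : ∀ v : Fin n, v.val < 3 → ∃ m : Fin n, m.val < 3 ∧ π m = v := by
        intro v hv
        rcases (by omega : v.val = 0 ∨ v.val = 1 ∨ v.val = 2) with h | h | h
        · exact ⟨o1, by omega, Fin.ext (by omega)⟩
        · exact ⟨o0, by omega, Fin.ext (by omega)⟩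
        · exact ⟨o2, by omega, Fin.ext (by omega)⟩
      have htail := id_tail hub 3 hfix hnd
      ext x
      rcases Nat.lt_or_ge x.val 3 with hx | hx
      · rcases (by omega : x.val = 0 ∨ x.val = 1 ∨ x.val = 2) with h | h | h
        · have hh : x = o0 := Fin.ext (by omega)
          subst hh
          rw [Equiv.swap_apply_left]
          omega
        · have hh : x = o1 := Fin.ext (by omega)
          subst hh
          rw [Equiv.swap_apply_right]
          omega
        · have hh : x = o2 := Fin.ext (by omega)
          subst hh
          rw [Equiv.swap_apply_of_ne_of_ne ne02.symm ne12.symm]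
          omega
      · have a1 : x ≠ o0 := Fin.ne_of_val_ne (by omega)
        have a2 : x ≠ o1 := Fin.ne_of_val_ne (by omega)
        rw [htail x hx, Equiv.swap_apply_of_ne_of_ne a1 a2]
    · -- π 2 = 3, so π 3 = 2 : swap o0 o1 * swap o2 o3
      have h2 : (π o2).val = 3 := by omega
      obtain ⟨hlt3, h3'⟩ := hSucc hA231 hA312 hA321 (show (π o2).val = o2.val + 1 by omega)
      have e3 : (⟨o2.val + 1, hlt3⟩ : Fin n) = o3 := Fin.ext (show o2.val + 1 = o3.val by omega)
      have h3 : (π o3).val = o2.val := by rw [← e3]; exact congrArg Fin.val h3'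
      right; right; right
      have hnd : ∀ k : Fin n, 4 ≤ k.val → (π k).val ≠ k.val + 1 := by
        intro k hk hkval
        have hxy : o0 < o2 := Fin.lt_def.mpr (by omega)
        have hyk : o2.val < k.val := by omega
        have hv1' : (π o0).val < (π o2).val := by omega
        have hv2' : (π o2).val < k.val := by omega
        exact no_descent hA231 hA312 hA321 hA1243 hxy hyk hv1' hv2' hkval
      have hfix : ∀ v : Fin n, v.val < 4 → ∃ m : Fin n, m.val < 4 ∧ π m = v := by
        intro v hv
        rcases (by omega : v.val = 0 ∨ v.val = 1 ∨ v.val = 2 ∨ v.val = 3) with h | h | h | h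
        · exact ⟨o1, by omega, Fin.ext (by omega)⟩
        · exact ⟨o0, by omega, Fin.ext (by omega)⟩
        · exact ⟨o3, by omega, Fin.ext (by omega)⟩
        · exact ⟨o2, by omega, Fin.ext (by omega)⟩
      have htail := id_tail hub 4 hfix hnd
      ext x
      rcases Nat.lt_or_ge x.val 4 with hx | hx
      · rcases (by omega : x.val = 0 ∨ x.val = 1 ∨ x.val = 2 ∨ x.val = 3) with h | h | h | h
        · have hh : x = o0 := Fin.ext (by omega)
          subst hh
          have a1 : x ≠ o2 := Fin.ne_of_val_ne (by omega)
          have a2 : x ≠ o3 := Fin.ne_of_val_ne (by omega)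
          rw [Equiv.Perm.mul_apply, Equiv.swap_apply_of_ne_of_ne a1 a2,
            Equiv.swap_apply_left]
          omega
        · have hh : x = o1 := Fin.ext (by omega)
          subst hh
          have a1 : x ≠ o2 := Fin.ne_of_val_ne (by omega)
          have a2 : x ≠ o3 := Fin.ne_of_val_ne (by omega)
          rw [Equiv.Perm.mul_apply, Equiv.swap_apply_of_ne_of_ne a1 a2,
            Equiv.swap_apply_right]
          omega
        · have hh : x = o2 := Fin.ext (by omega)
          subst hh
          have a1 : o3 ≠ o0 := Fin.ne_of_val_ne (by omega)
          have a2 : o3 ≠ o1 := Fin.ne_of_val_ne (by omega)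
          rw [Equiv.Perm.mul_apply, Equiv.swap_apply_left,
            Equiv.swap_apply_of_ne_of_ne a1 a2]
          omega
        · have hh : x = o3 := Fin.ext (by omega)
          subst hh
          have a1 : o2 ≠ o0 := Fin.ne_of_val_ne (by omega)
          have a2 : o2 ≠ o1 := Fin.ne_of_val_ne (by omega)
          rw [Equiv.Perm.mul_apply, Equiv.swap_apply_right,
            Equiv.swap_apply_of_ne_of_ne a1 a2]
          omega
      · have a1 : x ≠ o2 := Fin.ne_of_val_ne (by omega)
        have a2 : x ≠ o3 := Fin.ne_of_val_ne (by omega)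
        have a3 : x ≠ o0 := Fin.ne_of_val_ne (by omega)
        have a4 : x ≠ o1 := Fin.ne_of_val_ne (by omega)
        rw [htail x hx, Equiv.Perm.mul_apply,
          Equiv.swap_apply_of_ne_of_ne a1 a2, Equiv.swap_apply_of_ne_of_ne a3 a4]

end Classify

section Avoiders

variable {n : ℕ}

lemma val_s01 (o0 o1 : Fin n) (v0 : o0.val = 0) (v1 : o1.val = 1) (x : Fin n) :
    ((Equiv.swap o0 o1) x).val =
      if x.val = 0 then 1 else if x.val = 1 then 0 else x.val := by
  by_cases h0 : x.val = 0
  · have hx : x = o0 := Fin.ext (by omega)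
    rw [hx, Equiv.swap_apply_left, if_pos (by omega)]
    omega
  · by_cases h1 : x.val = 1
    · have hx : x = o1 := Fin.ext (by omega)
      rw [hx, Equiv.swap_apply_right, if_neg (by omega), if_pos (by omega)]
      omega
    · rw [Equiv.swap_apply_of_ne_of_ne (Fin.ne_of_val_ne (by omega))
        (Fin.ne_of_val_ne (by omega)), if_neg h0, if_neg h1]

lemma inv_s01 (o0 o1 : Fin n) (v0 : o0.val = 0) (v1 : o1.val = 1) {i j : Fin n}
    (hij : i < j) (hinv : (Equiv.swap o0 o1) j < (Equiv.swap o0 o1) i) :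
    i.val = 0 ∧ j.val = 1 := by
  have hi := val_s01 o0 o1 v0 v1 i
  have hj := val_s01 o0 o1 v0 v1 j
  have h1 := Fin.lt_def.mp hinv
  have h2 := Fin.lt_def.mp hij
  split_ifs at hi hj <;> omega

lemma val_s12 (o1 o2 : Fin n) (v1 : o1.val = 1) (v2 : o2.val = 2) (x : Fin n) :
    ((Equiv.swap o1 o2) x).val =
      if x.val = 1 then 2 else if x.val = 2 then 1 else x.val := by
  by_cases h0 : x.val = 1
  · have hx : x = o1 := Fin.ext (by omega)
    rw [hx, Equiv.swap_apply_left, if_pos (by omega)]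
    omega
  · by_cases h1 : x.val = 2
    · have hx : x = o2 := Fin.ext (by omega)
      rw [hx, Equiv.swap_apply_right, if_neg (by omega), if_pos (by omega)]
      omega
    · rw [Equiv.swap_apply_of_ne_of_ne (Fin.ne_of_val_ne (by omega))
        (Fin.ne_of_val_ne (by omega)), if_neg h0, if_neg h1]

lemma inv_s12 (o1 o2 : Fin n) (v1 : o1.val = 1) (v2 : o2.val = 2) {i j : Fin n}
    (hij : i < j) (hinv : (Equiv.swap o1 o2) j < (Equiv.swap o1 o2) i) :
    i.val = 1 ∧ j.val = 2 := by
  have hi := val_s12 o1 o2 v1 v2 i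
  have hj := val_s12 o1 o2 v1 v2 j
  have h1 := Fin.lt_def.mp hinv
  have h2 := Fin.lt_def.mp hij
  split_ifs at hi hj <;> omega

lemma val_s0123 (o0 o1 o2 o3 : Fin n) (v0 : o0.val = 0) (v1 : o1.val = 1)
    (v2 : o2.val = 2) (v3 : o3.val = 3) (x : Fin n) :
    ((Equiv.swap o0 o1 * Equiv.swap o2 o3) x).val =
      if x.val = 0 then 1 else if x.val = 1 then 0 else
      if x.val = 2 then 3 else if x.val = 3 then 2 else x.val := by
  rw [Equiv.Perm.mul_apply]
  by_cases h2 : x.val = 2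
  · have hx : x = o2 := Fin.ext (by omega)
    rw [hx, Equiv.swap_apply_left,
      Equiv.swap_apply_of_ne_of_ne (Fin.ne_of_val_ne (by omega))
        (Fin.ne_of_val_ne (by omega))]
    simp only [if_neg (show ¬o2.val = 0 by omega), if_neg (show ¬o2.val = 1 by omega),
      if_pos (show o2.val = 2 by omega)]
    omega
  · by_cases h3 : x.val = 3
    · have hx : x = o3 := Fin.ext (by omega)
      rw [hx, Equiv.swap_apply_right,
        Equiv.swap_apply_of_ne_of_ne (Fin.ne_of_val_ne (by omega))
          (Fin.ne_of_val_ne (by omega))]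
      simp only [if_neg (show ¬o3.val = 0 by omega), if_neg (show ¬o3.val = 1 by omega),
        if_neg (show ¬o3.val = 2 by omega), if_pos (show o3.val = 3 by omega)]
      omega
    · have a1 : x ≠ o2 := Fin.ne_of_val_ne (by omega)
      have a2 : x ≠ o3 := Fin.ne_of_val_ne (by omega)
      have hx23 : Equiv.swap o2 o3 x = x := Equiv.swap_apply_of_ne_of_ne a1 a2
      rw [hx23]
      simp only [if_neg h2, if_neg h3]
      exact val_s01 o0 o1 v0 v1 x

lemma inv_s0123 (o0 o1 o2 o3 : Fin n) (v0 : o0.val = 0) (v1 : o1.val = 1)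
    (v2 : o2.val = 2) (v3 : o3.val = 3) {i j : Fin n}
    (hij : i < j)
    (hinv : (Equiv.swap o0 o1 * Equiv.swap o2 o3) j < (Equiv.swap o0 o1 * Equiv.swap o2 o3) i) :
    (i.val = 0 ∧ j.val = 1) ∨ (i.val = 2 ∧ j.val = 3) := by
  have hi := val_s0123 o0 o1 o2 o3 v0 v1 v2 v3 i
  have hj := val_s0123 o0 o1 o2 o3 v0 v1 v2 v3 j
  have h1 := Fin.lt_def.mp hinv
  have h2 := Fin.lt_def.mp hij
  split_ifs at hi hj <;> omega

end Avoiders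


lemma via_swap {n : ℕ} (ι : Fin 4 ↪ Fin n) (a b : Fin 4) :
    Equiv.Perm.viaEmbeddingHom ι (Equiv.swap a b) = Equiv.swap (ι a) (ι b) := by
  rw [Equiv.Perm.viaEmbeddingHom_apply]
  ext x
  by_cases hx : ∃ y, ι y = x
  · obtain ⟨y, rfl⟩ := hx
    rw [Equiv.Perm.viaEmbedding_apply]
    exact congrArg Fin.val (ι.injective.swap_apply a b y).symm
  · push_neg at hx
    rw [Equiv.Perm.viaEmbedding_apply_of_notMem _ _ x (by simpa using fun y => hx y),
      Equiv.swap_apply_of_ne_of_ne (fun h => hx a h.symm) (fun h => hx b h.symm)]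

lemma avoid0123_1243 {n : ℕ} (o0 o1 o2 o3 : Fin n) (v0 : o0.val = 0) (v1 : o1.val = 1)
    (v2 : o2.val = 2) (v3 : o3.val = 3) :
    ¬ PermContains p1243 (Equiv.swap o0 o1 * Equiv.swap o2 o3) := by
  intro hcon
  obtain ⟨a, b, c, d, h1, h2, h3, h4, h5, h6⟩ := (c1243 _).mp hcon
  have hva := val_s0123 o0 o1 o2 o3 v0 v1 v2 v3 a
  have hvb := val_s0123 o0 o1 o2 o3 v0 v1 v2 v3 b
  have h4' := Fin.lt_def.mp h4
  have h1' := Fin.lt_def.mp h1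
  have h2' := Fin.lt_def.mp h2
  rcases inv_s0123 o0 o1 o2 o3 v0 v1 v2 v3 h3 h6 with ⟨e1, e2⟩ | ⟨e1, e2⟩
  · omega
  · split_ifs at hva hvb <;> omega

theorem avoid_231_312_321_1243_symm4 (n : ℕ) (hn : 4 ≤ n) :
    avoidSet n ({⟨3, p231⟩, ⟨3, p312⟩, ⟨3, p321⟩, ⟨4, p1243⟩} :
        Set (Σ k : ℕ, Equiv.Perm (Fin k))) =
      ({1,
        Equiv.swap (⟨0, by omega⟩ : Fin n) (⟨1, by omega⟩ : Fin n),
        Equiv.swap (⟨1, by omega⟩ : Fin n) (⟨2, by omega⟩ : Fin n),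
        Equiv.swap (⟨0, by omega⟩ : Fin n) (⟨1, by omega⟩ : Fin n) *
          Equiv.swap (⟨2, by omega⟩ : Fin n) (⟨3, by omega⟩ : Fin n)} :
        Set (Equiv.Perm (Fin n))) ∧
    Nonempty (Subgroup.closure
      (avoidSet n ({⟨3, p231⟩, ⟨3, p312⟩, ⟨3, p321⟩, ⟨4, p1243⟩} :
        Set (Σ k : ℕ, Equiv.Perm (Fin k)))) ≃* Equiv.Perm (Fin 4)) := by
  have hset : avoidSet n ({⟨3, p231⟩, ⟨3, p312⟩, ⟨3, p321⟩, ⟨4, p1243⟩} :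
        Set (Σ k : ℕ, Equiv.Perm (Fin k))) =
      ({1,
        Equiv.swap (⟨0, by omega⟩ : Fin n) (⟨1, by omega⟩ : Fin n),
        Equiv.swap (⟨1, by omega⟩ : Fin n) (⟨2, by omega⟩ : Fin n),
        Equiv.swap (⟨0, by omega⟩ : Fin n) (⟨1, by omega⟩ : Fin n) *
          Equiv.swap (⟨2, by omega⟩ : Fin n) (⟨3, by omega⟩ : Fin n)} :
        Set (Equiv.Perm (Fin n))) := by
    apply Set.eq_of_subset_of_subset
    · intro π hπ
      have hA231 : ∀ i j k : Fin n, i < j → j < k → π k < π i → π i < π j → False := by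
        intro i j k h1 h2 h3 h4
        exact hπ ⟨3, p231⟩ (by simp) ((c231 π).mpr ⟨i, j, k, h1, h2, h3, h4⟩)
      have hA312 : ∀ i j k : Fin n, i < j → j < k → π j < π k → π k < π i → False := by
        intro i j k h1 h2 h3 h4
        exact hπ ⟨3, p312⟩ (by simp) ((c312 π).mpr ⟨i, j, k, h1, h2, h3, h4⟩)
      have hA321 : ∀ i j k : Fin n, i < j → j < k → π j < π i → π k < π j → False := by
        intro i j k h1 h2 h3 h4
        exact hπ ⟨3, p321⟩ (by simp) ((c321 π).mpr ⟨i, j, k, h1, h2, h3, h4⟩)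
      have hA1243 : ∀ a b c d : Fin n, a < b → b < c → c < d →
          π a < π b → π b < π d → π d < π c → False := by
        intro a b c d h1 h2 h3 h4 h5 h6
        exact hπ ⟨4, p1243⟩ (by simp) ((c1243 π).mpr ⟨a, b, c, d, h1, h2, h3, h4, h5, h6⟩)
      have hcl := classify (⟨0, by omega⟩ : Fin n) ⟨1, by omega⟩ ⟨2, by omega⟩ ⟨3, by omega⟩
        rfl rfl rfl rfl hA231 hA312 hA321 hA1243
      simpa only [Set.mem_insert_iff, Set.mem_singleton_iff] using hcl
    · intro π hπ
      simp only [Set.mem_insert_iff, Set.mem_singleton_iff] at hπ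
      intro τ hτ
      simp only [Set.mem_insert_iff, Set.mem_singleton_iff] at hτ
      rcases hπ with rfl | rfl | rfl | rfl <;> rcases hτ with rfl | rfl | rfl | rfl
      · intro hcon
        obtain ⟨i, j, k, h1, h2, h3, h4⟩ := (c231 _).mp hcon
        simp only [Equiv.Perm.one_apply] at h3 h4
        exact absurd h3 (lt_asymm (h1.trans h2))
      · intro hcon
        obtain ⟨i, j, k, h1, h2, h3, h4⟩ := (c312 _).mp hcon
        simp only [Equiv.Perm.one_apply] at h3 h4
        exact absurd h4 (lt_asymm (h1.trans h2))
      · intro hcon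
        obtain ⟨i, j, k, h1, h2, h3, h4⟩ := (c321 _).mp hcon
        simp only [Equiv.Perm.one_apply] at h3 h4
        exact absurd h3 (lt_asymm h1)
      · intro hcon
        obtain ⟨a, b, c, d, h1, h2, h3, h4, h5, h6⟩ := (c1243 _).mp hcon
        simp only [Equiv.Perm.one_apply] at h6
        exact absurd h6 (lt_asymm h3)
      · intro hcon
        obtain ⟨i, j, k, h1, h2, h3, h4⟩ := (c231 _).mp hcon
        obtain ⟨e1, e2⟩ := inv_s01 _ _ rfl rfl (h1.trans h2) h3
        have := Fin.lt_def.mp h1; have := Fin.lt_def.mp h2; omega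
      · intro hcon
        obtain ⟨i, j, k, h1, h2, h3, h4⟩ := (c312 _).mp hcon
        obtain ⟨e1, e2⟩ := inv_s01 _ _ rfl rfl (h1.trans h2) h4
        have := Fin.lt_def.mp h1; have := Fin.lt_def.mp h2; omega
      · intro hcon
        obtain ⟨i, j, k, h1, h2, h3, h4⟩ := (c321 _).mp hcon
        obtain ⟨e1, e2⟩ := inv_s01 _ _ rfl rfl h1 h3
        obtain ⟨e3, e4⟩ := inv_s01 _ _ rfl rfl h2 h4
        omega
      · intro hcon
        obtain ⟨a, b, c, d, h1, h2, h3, h4, h5, h6⟩ := (c1243 _).mp hcon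
        obtain ⟨e1, e2⟩ := inv_s01 _ _ rfl rfl h3 h6
        have := Fin.lt_def.mp h1; have := Fin.lt_def.mp h2; omega
      · intro hcon
        obtain ⟨i, j, k, h1, h2, h3, h4⟩ := (c231 _).mp hcon
        obtain ⟨e1, e2⟩ := inv_s12 _ _ rfl rfl (h1.trans h2) h3
        have := Fin.lt_def.mp h1; have := Fin.lt_def.mp h2; omega
      · intro hcon
        obtain ⟨i, j, k, h1, h2, h3, h4⟩ := (c312 _).mp hcon
        obtain ⟨e1, e2⟩ := inv_s12 _ _ rfl rfl (h1.trans h2) h4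
        have := Fin.lt_def.mp h1; have := Fin.lt_def.mp h2; omega
      · intro hcon
        obtain ⟨i, j, k, h1, h2, h3, h4⟩ := (c321 _).mp hcon
        obtain ⟨e1, e2⟩ := inv_s12 _ _ rfl rfl h1 h3
        obtain ⟨e3, e4⟩ := inv_s12 _ _ rfl rfl h2 h4
        omega
      · intro hcon
        obtain ⟨a, b, c, d, h1, h2, h3, h4, h5, h6⟩ := (c1243 _).mp hcon
        obtain ⟨e1, e2⟩ := inv_s12 _ _ rfl rfl h3 h6
        have := Fin.lt_def.mp h1; have := Fin.lt_def.mp h2; omega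
      · intro hcon
        obtain ⟨i, j, k, h1, h2, h3, h4⟩ := (c231 _).mp hcon
        have hinv2 : (Equiv.swap (⟨0, by omega⟩ : Fin n) ⟨1, by omega⟩ *
            Equiv.swap (⟨2, by omega⟩ : Fin n) ⟨3, by omega⟩) k < _ := h3.trans h4
        rcases inv_s0123 _ _ _ _ rfl rfl rfl rfl (h1.trans h2) h3 with ⟨e1, e2⟩ | ⟨e1, e2⟩ <;>
          rcases inv_s0123 _ _ _ _ rfl rfl rfl rfl h2 hinv2 with ⟨e3, e4⟩ | ⟨e3, e4⟩ <;>
          (have := Fin.lt_def.mp h1; omega)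
      · intro hcon
        obtain ⟨i, j, k, h1, h2, h3, h4⟩ := (c312 _).mp hcon
        rcases inv_s0123 _ _ _ _ rfl rfl rfl rfl h1 (h3.trans h4) with ⟨e1, e2⟩ | ⟨e1, e2⟩ <;>
          rcases inv_s0123 _ _ _ _ rfl rfl rfl rfl (h1.trans h2) h4 with ⟨e3, e4⟩ | ⟨e3, e4⟩ <;>
          (have := Fin.lt_def.mp h2; omega)
      · intro hcon
        obtain ⟨i, j, k, h1, h2, h3, h4⟩ := (c321 _).mp hcon
        rcases inv_s0123 _ _ _ _ rfl rfl rfl rfl h1 h3 with ⟨e1, e2⟩ | ⟨e1, e2⟩ <;>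
          rcases inv_s0123 _ _ _ _ rfl rfl rfl rfl h2 h4 with ⟨e3, e4⟩ | ⟨e3, e4⟩ <;>
          omega
      · exact avoid0123_1243 _ _ _ _ rfl rfl rfl rfl
  refine ⟨hset, ?_⟩
  rw [hset]
  set ι : Fin 4 ↪ Fin n := Fin.castLEEmb hn with hι
  set Φ := Equiv.Perm.viaEmbeddingHom ι with hΦ
  have him01 : Φ (Equiv.swap 0 1) =
      Equiv.swap (⟨0, by omega⟩ : Fin n) ⟨1, by omega⟩ := by exact via_swap ι 0 1
  have him12 : Φ (Equiv.swap 1 2) =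
      Equiv.swap (⟨1, by omega⟩ : Fin n) ⟨2, by omega⟩ := by exact via_swap ι 1 2
  have him23 : Φ (Equiv.swap 2 3) =
      Equiv.swap (⟨2, by omega⟩ : Fin n) ⟨3, by omega⟩ := by exact via_swap ι 2 3
  set S : Set (Equiv.Perm (Fin n)) :=
      ({1,
        Equiv.swap (⟨0, by omega⟩ : Fin n) (⟨1, by omega⟩ : Fin n),
        Equiv.swap (⟨1, by omega⟩ : Fin n) (⟨2, by omega⟩ : Fin n),
        Equiv.swap (⟨0, by omega⟩ : Fin n) (⟨1, by omega⟩ : Fin n) *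
          Equiv.swap (⟨2, by omega⟩ : Fin n) (⟨3, by omega⟩ : Fin n)} :
        Set (Equiv.Perm (Fin n))) with hS
  have m01 : Φ (Equiv.swap 0 1) ∈ Subgroup.closure S := by
    apply Subgroup.subset_closure; rw [him01]; simp [hS]
  have m12 : Φ (Equiv.swap 1 2) ∈ Subgroup.closure S := by
    apply Subgroup.subset_closure; rw [him12]; simp [hS]
  have mprod : Φ (Equiv.swap 0 1) * Φ (Equiv.swap 2 3) ∈ Subgroup.closure S := by
    apply Subgroup.subset_closure; rw [him01, him23]; simp [hS]
  have m23 : Φ (Equiv.swap 2 3) ∈ Subgroup.closure S := by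
    have : Φ (Equiv.swap 2 3) =
        (Φ (Equiv.swap 0 1))⁻¹ * (Φ (Equiv.swap 0 1) * Φ (Equiv.swap 2 3)) := by
      group
    rw [this]
    exact mul_mem (inv_mem m01) mprod
  have key : ∀ a b : Fin 4, a ≠ b → Φ (Equiv.swap a b) ∈ Subgroup.closure S := by
    have h02 : Φ (Equiv.swap 0 2) ∈ Subgroup.closure S := by
      rw [show (Equiv.swap (0 : Fin 4) 2) =
        Equiv.swap 0 1 * Equiv.swap 1 2 * Equiv.swap 0 1 from by decide, map_mul, map_mul]
      exact mul_mem (mul_mem m01 m12) m01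
    have h13 : Φ (Equiv.swap 1 3) ∈ Subgroup.closure S := by
      rw [show (Equiv.swap (1 : Fin 4) 3) =
        Equiv.swap 1 2 * Equiv.swap 2 3 * Equiv.swap 1 2 from by decide, map_mul, map_mul]
      exact mul_mem (mul_mem m12 m23) m12
    have h03 : Φ (Equiv.swap 0 3) ∈ Subgroup.closure S := by
      rw [show (Equiv.swap (0 : Fin 4) 3) =
        Equiv.swap 0 1 * Equiv.swap 1 3 * Equiv.swap 0 1 from by decide, map_mul, map_mul]
      exact mul_mem (mul_mem m01 h13) m01
    intro a b hab
    fin_cases a <;> fin_cases b <;>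
      first
      | exact absurd rfl hab
      | exact m01
      | exact m12
      | exact m23
      | exact h02
      | exact h13
      | exact h03
      | (rw [Equiv.swap_comm]
         first
         | exact m01
         | exact m12
         | exact m23
         | exact h02
         | exact h13
         | exact h03)
  have hrange : Φ.range = Subgroup.closure S := by
    apply le_antisymm
    · rintro g ⟨σ, rfl⟩
      have hσ : σ ∈ Subgroup.closure {τ : Equiv.Perm (Fin 4) | τ.IsSwap} := by
        rw [Equiv.Perm.closure_isSwap]; exact Subgroup.mem_top σ
      induction hσ using Subgroup.closure_induction with
      | mem τ hτ =>
        obtain ⟨a, b, hab, rfl⟩ := hτ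
        exact key a b hab
      | one => rw [map_one]; exact one_mem _
      | mul x y hx hy ihx ihy => rw [map_mul]; exact mul_mem ihx ihy
      | inv x hx ih => rw [map_inv]; exact inv_mem ih
    · rw [Subgroup.closure_le]
      intro g hg
      simp only [hS, Set.mem_insert_iff, Set.mem_singleton_iff] at hg
      rcases hg with rfl | rfl | rfl | rfl
      · exact one_mem _
      · exact ⟨Equiv.swap 0 1, him01⟩
      · exact ⟨Equiv.swap 1 2, him12⟩
      · exact ⟨Equiv.swap 0 1 * Equiv.swap 2 3, by rw [map_mul, him01, him23]⟩
  exact ⟨(MulEquiv.subgroupCongr hrange.symm).trans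
    (MonoidHom.ofInjective (Equiv.Perm.viaEmbeddingHom_injective ι)).symm⟩
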